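/- Let V be a finite-dimensional vector space over a field K of characteristic 0 with basis S, let ≺ be a reflexive and transitive relation on S with coherent components Λ and subspaces V_λ, and let G⁰ ≤ GL(V) be the subgroup generated by all GL(V_λ), λ ∈ Λ, together with all elements I + tE_{αβ} with t ∈ K, α ≺ β and β ⊀ α. Then for every permutation σ of S preserving ≺: P_σ ∈ G⁰ if and only if σ(λ) = λ for every coherent component λ ∈ Λ (i.e., the induced permutation σ̄ of Λ is trivial). -/

import Mathlib

section

variable {S : Type*}

/-- The coherent components of a reflexive transitive relation `≺` on `S`: the
equivalence classes of `α ∼ β ↔ α ≺ β ∧ β ≺ α`. -/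
def IsCoherentClass (prec : S → S → Prop) (l : Set S) : Prop :=
  ∃ α : S, l = {β | prec α β ∧ prec β α}

variable {K V : Type*} [Field K] [AddCommGroup V] [Module K V]

/-- `V_λ`: the span of the basis vectors belonging to `λ`. -/
def spanClass (b : Module.Basis S K V) (l : Set S) : Submodule K V :=
  Submodule.span K (⇑b '' l)

/-- The embedded copies of `GL(V_λ)` for the coherent components `λ`: automorphisms
mapping `V_λ` into itself and fixing every basis vector outside `λ` (hence equal to
the identity on each `V_μ`, `μ ≠ λ`). -/
def genGLClass (b : Module.Basis S K V) (prec : S → S → Prop) : Set (V ≃ₗ[K] V) :=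
  {g | ∃ l : Set S, IsCoherentClass prec l ∧ (∀ s ∉ l, g (b s) = b s) ∧
    ∀ s ∈ l, g (b s) ∈ spanClass b l}

/-- The elements `I + t E_{αβ}` with `t ∈ K`, `α ≺ β` and `β ⊀ α`: they fix every
basis vector other than `β` and send `β` to `β + t • α`. -/
def genUnipotent (b : Module.Basis S K V) (prec : S → S → Prop) : Set (V ≃ₗ[K] V) :=
  {g | ∃ (t : K) (α β : S), prec α β ∧ ¬ prec β α ∧
    (∀ s : S, s ≠ β → g (b s) = b s) ∧ g (b β) = b β + t • b α}

/-- `G⁰ ≤ GL(V)`: the subgroup generated by all `GL(V_λ)`, `λ ∈ Λ`, together with all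
elements `I + t E_{αβ}` with `t ∈ K`, `α ≺ β` and `β ⊀ α`. -/
def connGroup (b : Module.Basis S K V) (prec : S → S → Prop) : Subgroup (V ≃ₗ[K] V) :=
  Subgroup.closure (genGLClass b prec ∪ genUnipotent b prec)

/-! ### Auxiliary material -/


private lemma maps_into {b : Module.Basis S K V} {prec : S → S → Prop} (htrans : Transitive prec)
    {g : V ≃ₗ[K] V} (hg : ∀ γ, g (b γ) ∈ Submodule.span K (⇑b '' {α | prec α γ}))
    {β : S} {x : V} (hx : x ∈ Submodule.span K (⇑b '' {α | prec α β})) :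
    g x ∈ Submodule.span K (⇑b '' {α | prec α β}) := by
  have h : Submodule.map (g : V →ₗ[K] V) (Submodule.span K (⇑b '' {α | prec α β})) ≤
      Submodule.span K (⇑b '' {α | prec α β}) := by
    rw [Submodule.map_span_le]
    rintro x ⟨α, hα, rfl⟩
    exact Submodule.span_mono (Set.image_mono fun γ hγ => htrans hγ hα) (hg α)
  exact h ⟨x, hx, rfl⟩

private def precSubgroup (b : Module.Basis S K V) (prec : S → S → Prop) (hrefl : Reflexive prec)
    (htrans : Transitive prec) : Subgroup (V ≃ₗ[K] V) where
  carrier := {g | ∀ β, g (b β) ∈ Submodule.span K (⇑b '' {α | prec α β}) ∧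
      g.symm (b β) ∈ Submodule.span K (⇑b '' {α | prec α β})}
  one_mem' := fun β => ⟨Submodule.subset_span ⟨β, hrefl β, rfl⟩,
    Submodule.subset_span ⟨β, hrefl β, rfl⟩⟩
  mul_mem' := by
    intro g h hg hh β
    refine ⟨?_, ?_⟩
    · show g (h (b β)) ∈ _
      exact maps_into htrans (fun γ => (hg γ).1) (hh β).1
    · show h.symm (g.symm (b β)) ∈ _
      exact maps_into htrans (fun γ => (hh γ).2) (hg β).2
  inv_mem' := by
    intro g hg β
    exact ⟨(hg β).2, (hg β).1⟩

private lemma gen_subset (b : Module.Basis S K V) (prec : S → S → Prop) (hrefl : Reflexive prec)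
    (htrans : Transitive prec) [FiniteDimensional K V] :
    genGLClass b prec ∪ genUnipotent b prec ⊆ ↑(precSubgroup b prec hrefl htrans) := by
  rintro g (⟨l, ⟨α₀, rfl⟩, hout, hin⟩ | ⟨t, α, β, hαβ, hβα, hout, hβ⟩)
  · -- GL-class generator
    have hαβne : True := trivial
    set l : Set S := {β | prec α₀ β ∧ prec β α₀} with hl
    have hsub : ∀ s ∈ l, spanClass b l ≤ Submodule.span K (⇑b '' {α | prec α s}) := by
      intro s hs
      exact Submodule.span_mono (Set.image_mono fun γ hγ => htrans hγ.2 hs.1)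
    -- g maps spanClass b l onto itself
    have hmap : Submodule.map (g : V →ₗ[K] V) (spanClass b l) = spanClass b l := by
      apply Submodule.eq_of_le_of_finrank_le
      · rw [spanClass, Submodule.map_span_le]
        rintro x ⟨s, hs, rfl⟩
        exact hin s hs
      · rw [LinearEquiv.finrank_map_eq]
    intro s
    by_cases hs : s ∈ l
    · constructor
      · exact hsub s hs (hin s hs)
      · apply hsub s hs
        have hbs : b s ∈ spanClass b l := Submodule.subset_span ⟨s, hs, rfl⟩
        rw [← hmap] at hbs
        obtain ⟨x, hx, hgx⟩ := hbs
        have : g.symm (b s) = x := by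
          apply g.injective
          simp only [LinearEquiv.apply_symm_apply]
          exact hgx.symm
        rw [this]; exact hx
    · have h1 : g (b s) = b s := hout s hs
      have h2 : g.symm (b s) = b s := by
        conv_lhs => rw [← h1]
        simp
      rw [h1, h2]
      exact ⟨Submodule.subset_span ⟨s, hrefl s, rfl⟩, Submodule.subset_span ⟨s, hrefl s, rfl⟩⟩
  · -- unipotent generator
    have hαne : α ≠ β := by rintro rfl; exact hβα hαβ
    have hsymmβ : g.symm (b β) = b β - t • b α := by
      apply g.injective
      simp only [LinearEquiv.apply_symm_apply, map_sub, map_smul, hβ, hout α hαne]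
      abel
    intro s
    by_cases hs : s = β
    · subst hs
      refine ⟨?_, ?_⟩
      · rw [hβ]
        exact Submodule.add_mem _ (Submodule.subset_span ⟨s, hrefl s, rfl⟩)
          (Submodule.smul_mem _ _ (Submodule.subset_span ⟨α, hαβ, rfl⟩))
      · rw [hsymmβ]
        exact Submodule.sub_mem _ (Submodule.subset_span ⟨s, hrefl s, rfl⟩)
          (Submodule.smul_mem _ _ (Submodule.subset_span ⟨α, hαβ, rfl⟩))
    · have h1 : g (b s) = b s := hout s hs
      have h2 : g.symm (b s) = b s := by
        conv_lhs => rw [← h1]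
        simp
      rw [h1, h2]
      exact ⟨Submodule.subset_span ⟨s, hrefl s, rfl⟩, Submodule.subset_span ⟨s, hrefl s, rfl⟩⟩

private lemma equiv_mul (b : Module.Basis S K V) (σ₁ σ₂ : Equiv.Perm S) :
    b.equiv b (σ₁ * σ₂) = b.equiv b σ₁ * b.equiv b σ₂ := by
  apply LinearEquiv.toLinearMap_injective
  apply b.ext
  intro i
  simp [Module.Basis.equiv_apply]

private lemma aux_back [Fintype S] [DecidableEq S] [FiniteDimensional K V]
    (b : Module.Basis S K V) (prec : S → S → Prop)
    (hrefl : Reflexive prec) (htrans : Transitive prec) :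
    ∀ (n : ℕ) (σ : Equiv.Perm S),
      (Finset.univ.filter fun s => σ s ≠ s).card ≤ n →
      (∀ l, IsCoherentClass prec l → ⇑σ '' l = l) → b.equiv b σ ∈ connGroup b prec := by
  intro n
  induction n with
  | zero =>
    intro σ hcard _
    have hσ1 : σ = 1 := by
      ext s
      by_contra hne
      have hne' : σ s ≠ s := by simpa using hne
      have : s ∈ Finset.univ.filter fun s => σ s ≠ s := by simp [hne']
      have := Finset.card_pos.2 ⟨s, this⟩
      omega
    rw [hσ1]
    have : b.equiv b (1 : Equiv.Perm S) = 1 := Module.Basis.equiv_refl b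
    rw [this]
    exact one_mem _
  | succ n ih =>
    intro σ hcard hfix
    by_cases h1 : ∀ s, σ s = s
    · have hσ1 : σ = 1 := Equiv.ext h1
      rw [hσ1]
      have : b.equiv b (1 : Equiv.Perm S) = 1 := Module.Basis.equiv_refl b
      rw [this]
      exact one_mem _
    push_neg at h1
    obtain ⟨s, hs⟩ := h1
    set ls : Set S := {β | prec s β ∧ prec β s} with hls
    have hls_coh : IsCoherentClass prec ls := ⟨s, rfl⟩
    have hsls : s ∈ ls := ⟨hrefl s, hrefl s⟩
    have hσs_mem : σ s ∈ ls := by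
      rw [← hfix ls hls_coh]; exact ⟨s, hsls, rfl⟩
    set τ : Equiv.Perm S := Equiv.swap s (σ s) with hτ
    -- τ maps every coherent class to itself
    have hτmem : ∀ l, IsCoherentClass prec l → ∀ t ∈ l, τ t ∈ l := by
      rintro l ⟨α₀, rfl⟩ t ht
      by_cases hts : t = s
      · subst hts
        rw [hτ, Equiv.swap_apply_left]
        exact ⟨htrans ht.1 hσs_mem.1, htrans hσs_mem.2 ht.2⟩
      by_cases htσs : t = σ s
      · subst htσs
        rw [hτ, Equiv.swap_apply_right]
        exact ⟨htrans ht.1 hσs_mem.2, htrans hσs_mem.1 ht.2⟩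
      · rw [hτ, Equiv.swap_apply_of_ne_of_ne hts htσs]
        exact ht
    have hτfix : ∀ l, IsCoherentClass prec l → ⇑τ '' l = l := by
      intro l hl
      apply Set.eq_of_subset_of_subset
      · rintro _ ⟨t, ht, rfl⟩; exact hτmem l hl t ht
      · intro t ht
        refine ⟨τ t, hτmem l hl t ht, ?_⟩
        rw [hτ]; exact Equiv.swap_apply_self _ _ _
    set σ' : Equiv.Perm S := τ * σ with hσ'
    have hσ's : σ' s = s := by
      rw [hσ', Equiv.Perm.mul_apply, hτ, Equiv.swap_apply_right]
    have hcard' : (Finset.univ.filter fun t => σ' t ≠ t).card ≤ n := by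
      have hsub : (Finset.univ.filter fun t => σ' t ≠ t) ⊆
          (Finset.univ.filter fun t => σ t ≠ t).erase s := by
        intro t ht
        simp only [Finset.mem_filter, Finset.mem_univ, true_and] at ht
        have htns : t ≠ s := by rintro rfl; exact ht hσ's
        have hσt : σ t ≠ t := by
          intro hfixt
          apply ht
          rw [hσ', Equiv.Perm.mul_apply, hfixt, hτ]
          have htnσs : t ≠ σ s := by
            rintro rfl
            exact hs (σ.injective hfixt)
          exact Equiv.swap_apply_of_ne_of_ne htns htnσs
        simp [Finset.mem_erase, htns, hσt]
      have hmem : s ∈ Finset.univ.filter fun t => σ t ≠ t := by simp [hs]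
      have := Finset.card_le_card hsub
      rw [Finset.card_erase_of_mem hmem] at this
      omega
    have hfix' : ∀ l, IsCoherentClass prec l → ⇑σ' '' l = l := by
      intro l hl
      rw [hσ']
      have : ⇑(τ * σ) = ⇑τ ∘ ⇑σ := rfl
      rw [this, Set.image_comp, hfix l hl, hτfix l hl]
    have hτconn : b.equiv b τ ∈ connGroup b prec := by
      apply Subgroup.subset_closure
      left
      refine ⟨ls, hls_coh, ?_, ?_⟩
      · intro t htl
        have htns : t ≠ s := by rintro rfl; exact htl hsls
        have htnσs : t ≠ σ s := by rintro rfl; exact htl hσs_mem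
        rw [Module.Basis.equiv_apply, hτ, Equiv.swap_apply_of_ne_of_ne htns htnσs]
      · intro t htl
        rw [Module.Basis.equiv_apply]
        exact Submodule.subset_span ⟨τ t, hτmem ls hls_coh t htl, rfl⟩
    have hστ : σ = τ * σ' := by
      rw [hσ', ← mul_assoc, hτ, Equiv.swap_mul_self, one_mul]
    rw [hστ, equiv_mul]
    exact mul_mem hτconn (ih σ' hcard' hfix')

/-- Let `V` be a finite-dimensional vector space over a field `K` of
characteristic `0` with basis `S`, `≺` a reflexive transitive relation on `S` with
coherent components `Λ` and subspaces `V_λ`, and `G⁰ ≤ GL(V)` the subgroup generated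
by all `GL(V_λ)` and all `I + t E_{αβ}` (`t ∈ K`, `α ≺ β`, `β ⊀ α`).  Then for every
permutation `σ` of `S` preserving `≺`: `P_σ ∈ G⁰` iff `σ(λ) = λ` for every coherent
component `λ ∈ Λ`, i.e. iff the induced permutation `σ̄` of `Λ` is trivial. -/
theorem permMap_mem_connGroup_iff [Fintype S] [DecidableEq S] [CharZero K]
    [FiniteDimensional K V] (b : Module.Basis S K V) (prec : S → S → Prop)
    (hrefl : Reflexive prec) (htrans : Transitive prec)
    (σ : Equiv.Perm S) (hσ : ∀ α β, prec α β → prec (σ α) (σ β)) :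
    b.equiv b σ ∈ connGroup b prec ↔
      ∀ l : Set S, IsCoherentClass prec l → ⇑σ '' l = l := by
  constructor
  · intro hmem
    have hH : b.equiv b σ ∈ precSubgroup b prec hrefl htrans := by
      have hle : connGroup b prec ≤ precSubgroup b prec hrefl htrans :=
        (Subgroup.closure_le _).2 (gen_subset b prec hrefl htrans)
      exact hle hmem
    have h1 : ∀ β, prec (σ β) β := by
      intro β
      have := (hH β).1
      rw [Module.Basis.equiv_apply, Module.Basis.self_mem_span_image] at this
      exact this
    have h2 : ∀ β, prec (σ.symm β) β := by
      intro β
      have := (hH β).2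
      rw [Module.Basis.equiv_symm, Module.Basis.equiv_apply, Module.Basis.self_mem_span_image] at this
      exact this
    have h3 : ∀ β, prec β (σ β) := by
      intro β
      have := h2 (σ β)
      simpa using this
    rintro l ⟨α₀, rfl⟩
    apply Set.eq_of_subset_of_subset
    · rintro _ ⟨t, ht, rfl⟩
      exact ⟨htrans ht.1 (h3 t), htrans (h1 t) ht.2⟩
    · intro t ht
      refine ⟨σ.symm t, ?_, σ.apply_symm_apply t⟩
      have h4 : prec t (σ.symm t) := by
        have := h1 (σ.symm t)
        simpa using this
      exact ⟨htrans ht.1 h4, htrans (h2 t) ht.2⟩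
  · intro hfix
    exact aux_back b prec hrefl htrans _ σ le_rfl hfix
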